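/- Let d ≥ 1, let W ≥ 2 be an even integer and D ≥ 1 an integer. Let f : ℝ^d → ℝ be a GroupSort network of width W and depth D (grouping size 2) whose weight matrices satisfy ‖V₁‖_{2,∞} ≤ 1 and ‖V_i‖_∞ ≤ 1 for all 2 ≤ i ≤ D. Then f is 1-Lipschitz with respect to the Euclidean norm on ℝ^d: |f(x) − f(y)| ≤ ‖x − y‖₂ for all x, y ∈ ℝ^d. -/

import Mathlib

open MeasureTheory
open scoped ENNReal NNReal BigOperators

noncomputable section

abbrev Euc (k : ℕ) := EuclideanSpace ℝ (Fin k)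

/-- The GroupSort activation with grouping size 2 on ℝ^{2k}: each consecutive pair
of coordinates is replaced by (their max, their min). -/
noncomputable def gsAct {k : ℕ} (x : Euc (2 * k)) : Euc (2 * k) :=
  WithLp.toLp 2 fun j =>
    if _h : j.val % 2 = 0 then
      max (x j) (x ⟨j.val + 1, by have := j.isLt; omega⟩)
    else
      min (x ⟨j.val - 1, by have := j.isLt; omega⟩) (x j)

/-- The supremum (ℓ^∞) norm on ℝ^n. -/
noncomputable def supNorm {n : ℕ} (x : Euc n) : ℝ := ⨆ i, |x i|

/-- Hidden stack of a norm-constrained GroupSort network from ℝ^d, of width `2k`: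
the first weight matrix satisfies `‖V₁‖_{2,∞} ≤ 1`, the others `‖V_i‖_∞ ≤ 1`. -/
inductive IsGSStackC (d k : ℕ) : ℕ → (Euc d → Euc (2 * k)) → Prop
  | base (V : Euc d →L[ℝ] Euc (2 * k)) (c : Euc (2 * k))
      (hV : ∀ (x : Euc d) (j : Fin (2 * k)), |V x j| ≤ ‖x‖) :
      IsGSStackC d k 1 (fun x => gsAct (V x + c))
  | step (h : ℕ) (φ : Euc d → Euc (2 * k))
      (V : Euc (2 * k) →L[ℝ] Euc (2 * k)) (c : Euc (2 * k))
      (hV : ∀ (y : Euc (2 * k)) (j : Fin (2 * k)), |V y j| ≤ supNorm y)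
      (hφ : IsGSStackC d k h φ) :
      IsGSStackC d k (h + 1) (fun x => gsAct (V (φ x) + c))

/-- `f` is a GroupSort network (grouping size 2) from ℝ^d to ℝ of width `2k` and depth
`D`, whose weight matrices satisfy `‖V₁‖_{2,∞} ≤ 1` and `‖V_i‖_∞ ≤ 1` for `i ≥ 2`. -/
def IsGSNetC (d k : ℕ) (D : ℕ) (f : Euc d → ℝ) : Prop :=
  (D = 1 ∧ ∃ (V : Euc d →L[ℝ] ℝ) (c : ℝ), (∀ x : Euc d, |V x| ≤ ‖x‖) ∧
      f = fun x => V x + c) ∨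
  (2 ≤ D ∧ ∃ φ : Euc d → Euc (2 * k), IsGSStackC d k (D - 1) φ ∧
      ∃ (V : Euc (2 * k) →L[ℝ] ℝ) (c : ℝ), (∀ y : Euc (2 * k), |V y| ≤ supNorm y) ∧
        f = fun x => V (φ x) + c)


lemma abs_le_supNorm {n : ℕ} (x : Euc n) (i : Fin n) : |x i| ≤ supNorm x := by
  unfold supNorm
  exact le_ciSup (f := fun i => |x i|) ((Set.finite_range _).bddAbove) i

lemma supNorm_le {n : ℕ} [Nonempty (Fin n)] (x : Euc n) {c : ℝ}
    (h : ∀ i, |x i| ≤ c) : supNorm x ≤ c := ciSup_le h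

lemma gsAct_lip {k : ℕ} (x y : Euc (2 * k)) (j : Fin (2 * k)) :
    |gsAct x j - gsAct y j| ≤ supNorm (x - y) := by
  have key : ∀ a : Fin (2 * k), |x a - y a| ≤ supNorm (x - y) := by
    intro a
    have := abs_le_supNorm (x - y) a; simpa using this
  unfold gsAct
  simp only [WithLp.ofLp_toLp]
  split
  · exact le_trans (abs_max_sub_max_le_max _ _ _ _) (max_le (key _) (key _))
  · exact le_trans (abs_min_sub_min_le_max _ _ _ _) (max_le (key _) (key _))

lemma stack_lip {d k h : ℕ} (hk : 1 ≤ k) {φ : Euc d → Euc (2 * k)}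
    (hφ : IsGSStackC d k h φ) (x y : Euc d) :
    ∀ j : Fin (2 * k), |φ x j - φ y j| ≤ ‖x - y‖ := by
  have : Nonempty (Fin (2 * k)) := ⟨⟨0, by omega⟩⟩
  induction hφ with
  | base V c hV =>
      intro j
      refine le_trans (gsAct_lip _ _ j) (supNorm_le _ ?_)
      intro i
      have : ((V x + c) - (V y + c)) i = V (x - y) i := by
        simp [map_sub]
      rw [this]
      exact hV _ i
  | step h ψ V c hV hψ ih =>
      intro j
      refine le_trans (gsAct_lip _ _ j) (supNorm_le _ ?_)
      intro i
      have e : ((V (ψ x) + c) - (V (ψ y) + c)) i = V (ψ x - ψ y) i := by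
        simp [map_sub]
      rw [e]
      refine le_trans (hV _ i) (supNorm_le _ ?_)
      intro i'
      have : (ψ x - ψ y) i' = ψ x i' - ψ y i' := by simp
      rw [this]
      exact ih i'

/-- **Norm-constrained GroupSort networks are 1-Lipschitz**
(Proposition 1 of the paper, after Tanielian–Biau). -/
theorem groupSortNet_one_lipschitz (d k D : ℕ) (hd : 1 ≤ d) (hk : 1 ≤ k) (hD : 1 ≤ D)
    (f : Euc d → ℝ) (hf : IsGSNetC d k D f) :
    ∀ x y : Euc d, |f x - f y| ≤ ‖x - y‖ := by
  intro x y
  rcases hf with ⟨_, V, c, hV, rfl⟩ | ⟨_, φ, hφ, V, c, hV, rfl⟩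
  · have : (V x + c) - (V y + c) = V (x - y) := by rw [map_sub]; ring
    rw [this]
    exact hV _
  · have : Nonempty (Fin (2 * k)) := ⟨⟨0, by omega⟩⟩
    have e : (V (φ x) + c) - (V (φ y) + c) = V (φ x - φ y) := by
      rw [map_sub]; ring
    rw [e]
    refine le_trans (hV _) (supNorm_le _ ?_)
    intro i
    have : (φ x - φ y) i = φ x i - φ y i := by simp
    rw [this]
    exact stack_lip hk hφ x y i

end
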